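/- Let p : (0,∞) → ℝ be three times continuously differentiable with p'(ρ) > 0, and suppose 2·p'(ρ) + ρ·p''(ρ) ≥ 0 and 6·p'(ρ) + 6·ρ·p''(ρ) + ρ²·p'''(ρ) ≥ 0 for all ρ > 0. Then for all 0 < ρ_l ≤ ρ, 2·f(ρ, ρ_l)·∂²_ρ f(ρ, ρ_l) − (∂_ρ f(ρ, ρ_l))² ≥ 0, where f(ρ, ρ_l) = (ρ/ρ_l)(ρ − ρ_l)(p(ρ) − p(ρ_l)) and ∂_ρ denotes the partial derivative with respect to the first argument. -/

import Mathlib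

open Filter Topology Set

/-- For `p ∈ C³((0,∞))` with `p' > 0`, `2p' + ρp'' ≥ 0` and
`6p' + 6ρp'' + ρ²p''' ≥ 0`, the function `f(ρ, ρ_l) = (ρ/ρ_l)(ρ−ρ_l)(p(ρ)−p(ρ_l))`
satisfies `2 f ∂²_ρ f − (∂_ρ f)² ≥ 0` for all `0 < ρ_l ≤ ρ`. -/
theorem stmt12 (p p' p'' p''' : ℝ → ℝ)
    (hp' : ∀ ρ > (0 : ℝ), HasDerivAt p (p' ρ) ρ)
    (hp'' : ∀ ρ > (0 : ℝ), HasDerivAt p' (p'' ρ) ρ)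
    (hp''' : ∀ ρ > (0 : ℝ), HasDerivAt p'' (p''' ρ) ρ)
    (hp'''cont : ContinuousOn p''' (Set.Ioi 0))
    (hppos : ∀ ρ > (0 : ℝ), 0 < p' ρ)
    (h1 : ∀ ρ > (0 : ℝ), 0 ≤ 2 * p' ρ + ρ * p'' ρ)
    (h2 : ∀ ρ > (0 : ℝ), 0 ≤ 6 * p' ρ + 6 * ρ * p'' ρ + ρ ^ 2 * p''' ρ) :
    ∀ ρl ρ : ℝ, 0 < ρl → ρl ≤ ρ →
      0 ≤ 2 * (ρ / ρl * (ρ - ρl) * (p ρ - p ρl)) *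
            deriv (deriv (fun x => x / ρl * (x - ρl) * (p x - p ρl))) ρ -
          (deriv (fun x => x / ρl * (x - ρl) * (p x - p ρl)) ρ) ^ 2 := by
  intro ρl ρ hρl hle
  have hρ : (0 : ℝ) < ρ := lt_of_lt_of_le hρl hle
  set f : ℝ → ℝ := fun x => x / ρl * (x - ρl) * (p x - p ρl) with hf
  set F1 : ℝ → ℝ := fun x => (2*x - ρl)/ρl * (p x - p ρl) + x*(x - ρl)/ρl * p' x with hF1d
  set F2 : ℝ → ℝ := fun x =>
    2/ρl * (p x - p ρl) + 2*(2*x - ρl)/ρl * p' x + x*(x - ρl)/ρl * p'' x with hF2d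
  set F3 : ℝ → ℝ := fun x =>
    6/ρl * p' x + 3*(2*x - ρl)/ρl * p'' x + x*(x - ρl)/ρl * p''' x with hF3d
  have hdf : ∀ x ∈ Ioi (0:ℝ), HasDerivAt f (F1 x) x := by
    intro x hx
    have h0 : HasDerivAt (fun y => y / ρl * (y - ρl)) ((1/ρl)*(x-ρl) + x/ρl*1) x :=
      (((hasDerivAt_id x).div_const ρl).mul ((hasDerivAt_id x).sub_const ρl))
    have := h0.fun_mul ((hp' x hx).sub_const (p ρl))
    refine this.congr_deriv ?_
    simp only [hF1d]
    ring
  have hdF1 : ∀ x ∈ Ioi (0:ℝ), HasDerivAt F1 (F2 x) x := by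
    intro x hx
    have ha : HasDerivAt (fun y => (2*y - ρl)/ρl * (p y - p ρl))
        ((2*1 - 0)/ρl * (p x - p ρl) + (2*x - ρl)/ρl * p' x) x := by
      have := ((((hasDerivAt_id x).const_mul 2).sub_const ρl).div_const ρl).fun_mul
        ((hp' x hx).sub_const (p ρl))
      refine this.congr_deriv ?_
      all_goals simp only [id_eq, Pi.mul_apply]; ring
    have hb : HasDerivAt (fun y => y*(y - ρl)/ρl * p' y)
        (((1*(x-ρl) + x*1)/ρl) * p' x + x*(x - ρl)/ρl * p'' x) x := by
      have := ((((hasDerivAt_id x).mul ((hasDerivAt_id x).sub_const ρl)).div_const ρl).fun_mul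
        (hp'' x hx))
      refine this.congr_deriv ?_
      all_goals simp only [id_eq, Pi.mul_apply]
    have := ha.fun_add hb
    refine this.congr_deriv ?_
    simp only [hF2d]
    ring
  have hdF2 : ∀ x ∈ Ioi (0:ℝ), HasDerivAt F2 (F3 x) x := by
    intro x hx
    have ha : HasDerivAt (fun y => 2/ρl * (p y - p ρl)) (2/ρl * p' x) x :=
      ((hp' x hx).sub_const (p ρl)).const_mul (2/ρl)
    have hb : HasDerivAt (fun y => 2*(2*y - ρl)/ρl * p' y)
        ((2*(2*1) - 0)/ρl * p' x + 2*(2*x - ρl)/ρl * p'' x) x := by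
      have := (((((hasDerivAt_id x).const_mul 2).sub_const ρl).const_mul 2).div_const ρl).fun_mul
        (hp'' x hx)
      refine this.congr_deriv ?_
      all_goals simp only [id_eq, Pi.mul_apply]; ring
    have hc : HasDerivAt (fun y => y*(y - ρl)/ρl * p'' y)
        (((1*(x-ρl) + x*1)/ρl) * p'' x + x*(x - ρl)/ρl * p''' x) x := by
      have := ((((hasDerivAt_id x).mul ((hasDerivAt_id x).sub_const ρl)).div_const ρl).fun_mul
        (hp''' x hx))
      refine this.congr_deriv ?_
      all_goals simp only [id_eq, Pi.mul_apply]
    have := (ha.fun_add hb).fun_add hc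
    refine this.congr_deriv ?_
    simp only [hF3d]
    ring
  have hd1 : deriv f ρ = F1 ρ := (hdf ρ hρ).deriv
  have heq : deriv f =ᶠ[𝓝 ρ] F1 :=
    Filter.eventuallyEq_of_mem (Ioi_mem_nhds hρ) (fun x hx => (hdf x hx).deriv)
  have hd2 : deriv (deriv f) ρ = F2 ρ := by
    rw [heq.deriv_eq]; exact (hdF1 ρ hρ).deriv
  rw [hd1, hd2]
  -- the quantity as a function of x
  set E : ℝ → ℝ := fun x => 2 * (f x * F2 x) - (F1 x)^2 with hE
  have hdE : ∀ x ∈ Ioi (0:ℝ), HasDerivAt E (2 * f x * F3 x) x := by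
    intro x hx
    have := (((hdf x hx).fun_mul (hdF2 x hx)).const_mul 2).fun_sub ((hdF1 x hx).fun_pow 2)
    refine this.congr_deriv ?_
    ring
  -- p is strictly monotone on (0, ∞)
  have hmono : StrictMonoOn p (Ioi 0) := by
    apply strictMonoOn_of_deriv_pos (convex_Ioi 0)
    · exact fun x hx => (hp' x hx).continuousAt.continuousWithinAt
    · intro x hx
      rw [interior_Ioi] at hx
      rw [(hp' x hx).deriv]
      exact hppos x hx
  -- E derivative nonneg on (ρl, ρ)
  have hDnonneg : ∀ x ∈ Ioo ρl ρ, 0 ≤ 2 * f x * F3 x := by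
    intro x hx
    have hx0 : (0:ℝ) < x := lt_trans hρl hx.1
    have hq : 0 ≤ p x - p ρl := sub_nonneg.2 (hmono hρl hx0 hx.1).le
    have hfx : 0 ≤ f x := by
      apply mul_nonneg (mul_nonneg (div_nonneg hx0.le hρl.le) (by linarith [hx.1])) hq
    have hA := h1 x hx0
    have hB := h2 x hx0
    have hF3 : 0 ≤ F3 x := by
      have key : F3 x = ((x - ρl)*(6*p' x + 6*x*p'' x + x^2*p''' x)
          + 3*ρl*(2*p' x + x*p'' x))/(ρl*x) := by
        simp only [hF3d]
        field_simp
        ring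
      rw [key]
      apply div_nonneg _ (mul_nonneg hρl.le hx0.le)
      have := mul_nonneg (sub_nonneg.2 hx.1.le) hB
      have := mul_nonneg (by linarith : (0:ℝ) ≤ 3*ρl) hA
      linarith
    positivity
  -- E is monotone on [ρl, ρ]
  have hEmono : MonotoneOn E (Icc ρl ρ) := by
    apply monotoneOn_of_deriv_nonneg (convex_Icc ρl ρ)
    · intro x hx
      exact (hdE x (lt_of_lt_of_le hρl hx.1)).continuousAt.continuousWithinAt
    · intro x hx
      rw [interior_Icc] at hx
      exact (hdE x (lt_trans hρl hx.1)).differentiableAt.differentiableWithinAt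
    · intro x hx
      rw [interior_Icc] at hx
      rw [(hdE x (lt_trans hρl hx.1)).deriv]
      exact hDnonneg x hx
  have hEρl : E ρl = 0 := by
    simp only [hE, hf, hF1d]
    simp
  have hEρ : E ρl ≤ E ρ := hEmono (left_mem_Icc.2 hle) (right_mem_Icc.2 hle) hle
  rw [hEρl] at hEρ
  simp only [hE, hf] at hEρ
  linarith
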